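/- Let μ and ν be Borel measures on ℝ of total mass at most 1, and let μ be absolutely continuous. Define grid points −∞ = s(0) < s(1) < … < s(M−1) < s(M) = +∞ by μ((−∞, s(j)]) = j/M for 1 ≤ j ≤ M−1, and let d_{M,KS}(μ,ν) = max_{1≤i≤M−1} |μ([s(1),s(i)]) − ν([s(1),s(i)])|. Then d_{KS}(ν, μ) ≤ 5/M + 2·d_{M,KS}(ν, μ). -/

import Mathlib

open MeasureTheory

/-- The Kolmogorov–Smirnov distance of two finite Borel measures on `ℝ`. -/
noncomputable def dKS (μ ν : Measure ℝ) : ℝ :=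
  ⨆ t : ℝ, |(μ (Set.Iic t)).toReal - (ν (Set.Iic t)).toReal|

lemma mgrid_aux_add (ρ : Measure ℝ) [IsFiniteMeasure ρ] {a b : ℝ} (h : a ≤ b) :
    (ρ (Set.Iic b)).toReal = (ρ (Set.Iio a)).toReal + (ρ (Set.Icc a b)).toReal := by
  rw [← ENNReal.toReal_add (measure_ne_top _ _) (measure_ne_top _ _),
    ← measure_union ?_ measurableSet_Icc, Set.Iio_union_Icc_eq_Iic h]
  rw [Set.disjoint_left]
  rintro x hx ⟨h1, _⟩
  exact absurd h1 (not_le.mpr hx)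

lemma mgrid_aux_univ (ρ : Measure ℝ) [IsFiniteMeasure ρ] (a : ℝ) :
    (ρ Set.univ).toReal = (ρ (Set.Iio a)).toReal + (ρ (Set.Ici a)).toReal := by
  rw [← ENNReal.toReal_add (measure_ne_top _ _) (measure_ne_top _ _),
    ← measure_union ?_ measurableSet_Ici, Set.Iio_union_Ici]
  rw [Set.disjoint_left]
  rintro x hx h1
  exact absurd (Set.mem_Ici.mp h1) (not_le.mpr hx)

lemma mgrid_aux_mono (ρ : Measure ℝ) [IsFiniteMeasure ρ] {A B : Set ℝ} (h : A ⊆ B) :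
    (ρ A).toReal ≤ (ρ B).toReal :=
  ENNReal.toReal_mono (measure_ne_top _ _) (measure_mono h)

/-- **The `M`-grid estimate.**  Let `μ` and `ν` be Borel measures on `ℝ` of total mass at
most `1`, with `μ` absolutely continuous.  Choose grid points
`s(1) < … < s(M-1)` with `μ((-∞, s(j)]) = j/M` for `1 ≤ j ≤ M-1`, and let
`d_{M,KS}(μ,ν) = max_{1 ≤ i ≤ M-1} |μ([s(1),s(i)]) - ν([s(1),s(i)])|`.  Then
`d_KS(ν, μ) ≤ 5/M + 2·d_{M,KS}(ν, μ)`. -/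
theorem mgrid_estimate (μ ν : Measure ℝ) [IsFiniteMeasure μ] [IsFiniteMeasure ν]
    (hμ1 : μ Set.univ ≤ 1) (hν1 : ν Set.univ ≤ 1) (hac : μ ≪ volume)
    (M : ℕ) (hM : 2 ≤ M) (s : ℕ → ℝ)
    (hs : StrictMonoOn s (Set.Icc 1 (M - 1)))
    (hgrid : ∀ j : ℕ, 1 ≤ j → j ≤ M - 1 → (μ (Set.Iic (s j))).toReal = (j : ℝ) / M) :
    dKS ν μ ≤ 5 / (M : ℝ) +
      2 * ((Finset.Icc 1 (M - 1)).sup' (by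
          refine Finset.nonempty_Icc.mpr ?_; omega)
        fun i => |(μ (Set.Icc (s 1) (s i))).toReal - (ν (Set.Icc (s 1) (s i))).toReal|) := by
  classical
  have hne : (Finset.Icc 1 (M - 1)).Nonempty := Finset.nonempty_Icc.mpr (by omega)
  set D := (Finset.Icc 1 (M - 1)).sup'
      hne (fun i => |(μ (Set.Icc (s 1) (s i))).toReal - (ν (Set.Icc (s 1) (s i))).toReal|)
    with hDdef
  show dKS ν μ ≤ 5 / (M : ℝ) + 2 * D
  have hMpos : (0 : ℝ) < M := by positivity
  have hkey : ((M : ℝ) - 1) / M + 1 / M = 1 := by field_simp; ring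
  have h3M : (0 : ℝ) ≤ 3 / M := by positivity
  have e25 : (2 : ℝ) / M + 3 / M = 5 / M := by ring
  have e12 : (1 : ℝ) / M + 1 / M = 2 / M := by ring
  have hDle : ∀ i : ℕ, 1 ≤ i → i ≤ M - 1 →
      |(μ (Set.Icc (s 1) (s i))).toReal - (ν (Set.Icc (s 1) (s i))).toReal| ≤ D := by
    intro i h1 h2
    rw [hDdef]
    exact Finset.le_sup'
      (fun i => |(μ (Set.Icc (s 1) (s i))).toReal - (ν (Set.Icc (s 1) (s i))).toReal|)
      (Finset.mem_Icc.mpr ⟨h1, h2⟩)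
  have hD0 : 0 ≤ D := le_trans (abs_nonneg _) (hDle 1 le_rfl (by omega))
  have hs1 : ∀ i : ℕ, 1 ≤ i → i ≤ M - 1 → s 1 ≤ s i := by
    intro i h1 h2
    exact hs.monotoneOn (Set.mem_Icc.mpr ⟨le_rfl, by omega⟩) (Set.mem_Icc.mpr ⟨h1, h2⟩) h1
  have hpt : ∀ x : ℝ, μ {x} = 0 := fun x => hac (by simp)
  have hIicIio : ∀ x : ℝ, (μ (Set.Iic x)).toReal = (μ (Set.Iio x)).toReal := by
    intro x
    have h1 : μ (Set.Iic x) ≤ μ (Set.Iio x) := by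
      rw [← Set.Iio_union_right]
      exact (measure_union_le _ _).trans (by rw [hpt, add_zero])
    have h2 : μ (Set.Iio x) ≤ μ (Set.Iic x) := measure_mono Set.Iio_subset_Iic_self
    rw [le_antisymm h1 h2]
  have hgrid1 : (μ (Set.Iic (s 1))).toReal = 1 / M := by
    have := hgrid 1 le_rfl (by omega); push_cast at this; exact this
  have haμ : ∀ i : ℕ, 1 ≤ i → i ≤ M - 1 →
      (μ (Set.Icc (s 1) (s i))).toReal = (i : ℝ) / M - 1 / M := by
    intro i h1 h2
    have h := mgrid_aux_add μ (hs1 i h1 h2)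
    rw [hgrid i h1 h2, ← hIicIio, hgrid1] at h
    linarith
  have hbν : ∀ i : ℕ, 1 ≤ i → i ≤ M - 1 →
      (i : ℝ) / M - 1 / M - D ≤ (ν (Set.Icc (s 1) (s i))).toReal ∧
        (ν (Set.Icc (s 1) (s i))).toReal ≤ (i : ℝ) / M - 1 / M + D := by
    intro i h1 h2
    have h := hDle i h1 h2
    rw [haμ i h1 h2, abs_le] at h
    constructor <;> linarith [h.1, h.2]
  set c := (ν (Set.Iio (s 1))).toReal with hcdef
  have hc0 : 0 ≤ c := ENNReal.toReal_nonneg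
  have hν1' : (ν Set.univ).toReal ≤ 1 := by
    have := ENNReal.toReal_mono (by simp) hν1
    simpa using this
  have hμ1' : ∀ t : ℝ, (μ (Set.Iic t)).toReal ≤ 1 := by
    intro t
    have h : μ (Set.Iic t) ≤ 1 := (measure_mono (Set.subset_univ (Set.Iic t))).trans hμ1
    simpa using ENNReal.toReal_mono (by simp) h
  have hν1'' : ∀ t : ℝ, (ν (Set.Iic t)).toReal ≤ 1 := by
    intro t
    have h : ν (Set.Iic t) ≤ 1 := (measure_mono (Set.subset_univ (Set.Iic t))).trans hν1
    simpa using ENNReal.toReal_mono (by simp) h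
  have hcastM : ((M - 1 : ℕ) : ℝ) = (M : ℝ) - 1 := by
    push_cast [Nat.cast_sub (by omega : 1 ≤ M)]; ring
  have hcub : c ≤ 2 / M + D := by
    have h1 := mgrid_aux_univ ν (s 1)
    have h2 : (ν (Set.Icc (s 1) (s (M - 1)))).toReal ≤ (ν (Set.Ici (s 1))).toReal :=
      mgrid_aux_mono ν Set.Icc_subset_Ici_self
    have h3 := (hbν (M - 1) (by omega) le_rfl).1
    rw [hcastM] at h3
    linarith
  have hGν : ∀ i : ℕ, 1 ≤ i → i ≤ M - 1 →
      (ν (Set.Iic (s i))).toReal = c + (ν (Set.Icc (s 1) (s i))).toReal := by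
    intro i h1 h2
    exact mgrid_aux_add ν (hs1 i h1 h2)
  refine ciSup_le fun t => ?_
  set Gt := (ν (Set.Iic t)).toReal with hGtdef
  set Ft := (μ (Set.Iic t)).toReal with hFtdef
  have hF0 : 0 ≤ Ft := ENNReal.toReal_nonneg
  have hG0 : 0 ≤ Gt := ENNReal.toReal_nonneg
  rw [abs_le]
  by_cases hta : t < s 1
  · -- t below the grid
    have hF : Ft ≤ 1 / M := by
      rw [← hgrid1]
      exact mgrid_aux_mono μ (Set.Iic_subset_Iic.mpr hta.le)
    have hG : Gt ≤ c + D := by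
      have h1 : Gt ≤ (ν (Set.Iic (s 1))).toReal :=
        mgrid_aux_mono ν (Set.Iic_subset_Iic.mpr hta.le)
      have h2 := hGν 1 le_rfl (by omega)
      have h3 := (hbν 1 le_rfl (by omega)).2
      push_cast at h3
      linarith
    constructor <;> linarith
  · push_neg at hta
    set J := (Finset.Icc 1 (M - 1)).filter (fun j => s j ≤ t) with hJdef
    have hJne : J.Nonempty :=
      ⟨1, Finset.mem_filter.mpr ⟨Finset.mem_Icc.mpr ⟨le_rfl, by omega⟩, hta⟩⟩
    set i := J.max' hJne with hidef
    have hiJ : i ∈ J := Finset.max'_mem _ _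
    obtain ⟨hiIcc, hit⟩ := Finset.mem_filter.mp hiJ
    obtain ⟨hi1, hi2⟩ := Finset.mem_Icc.mp hiIcc
    have hFlow : (i : ℝ) / M ≤ Ft := by
      rw [← hgrid i hi1 hi2]
      exact mgrid_aux_mono μ (Set.Iic_subset_Iic.mpr hit)
    have hGlow : (i : ℝ) / M - 1 / M - D ≤ Gt := by
      have h1 : (ν (Set.Iic (s i))).toReal ≤ Gt :=
        mgrid_aux_mono ν (Set.Iic_subset_Iic.mpr hit)
      have h2 := hGν i hi1 hi2
      have h3 := (hbν i hi1 hi2).1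
      linarith
    by_cases hiM : i = M - 1
    · -- t above the last grid point
      rw [hiM, hcastM] at hFlow hGlow
      constructor <;> linarith [hμ1' t, hν1'' t]
    · have hi2' : i + 1 ≤ M - 1 := by omega
      have hnt : t < s (i + 1) := by
        by_contra h
        push_neg at h
        have hmem : i + 1 ∈ J :=
          Finset.mem_filter.mpr ⟨Finset.mem_Icc.mpr ⟨by omega, hi2'⟩, h⟩
        have := Finset.le_max' J _ hmem
        omega
      have hsub : Set.Iic t ⊆ Set.Iic (s (i + 1)) := Set.Iic_subset_Iic.mpr hnt.le
      have hcast : ((i + 1 : ℕ) : ℝ) = (i : ℝ) + 1 := by push_cast; ring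
      have e2 : ((i : ℝ) + 1) / M = (i : ℝ) / M + 1 / M := by ring
      have hFup : Ft ≤ (i : ℝ) / M + 1 / M := by
        have h1 : Ft ≤ (μ (Set.Iic (s (i + 1)))).toReal := mgrid_aux_mono μ hsub
        rw [hgrid (i + 1) (by omega) hi2', hcast, e2] at h1
        exact h1
      have hGup : Gt ≤ (2 / M + D) + ((i : ℝ) / M + 1 / M - 1 / M + D) := by
        have h1 : Gt ≤ (ν (Set.Iic (s (i + 1)))).toReal := mgrid_aux_mono ν hsub
        have h2 := hGν (i + 1) (by omega) hi2'
        have h3 := (hbν (i + 1) (by omega) hi2').2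
        rw [hcast, e2] at h3
        linarith
      constructor <;> linarith
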